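/- Let Ω be a bounded open subset of ℝ^N (N ≥ 3) and let p₁, p₂, q : closure(Ω) → ℝ be continuous functions satisfying 1 < p₂(x) < q⁻ ≤ q⁺ < p₁(x) < N and q⁺ < N p₂(x)/(N − p₂(x)) for all x ∈ closure(Ω), where q⁻ = min_{closure(Ω)} q and q⁺ = max_{closure(Ω)} q. For u : ℝ^N → ℝ of class C¹ with compact support contained in Ω, set J(u) = ∫_Ω (1/p₁(x))|Du|^{p₁(x)} dx + ∫_Ω (1/p₂(x))|Du|^{p₂(x)} dx, I(u) = ∫_Ω (1/q(x))|u|^{q(x)} dx, and ‖u‖ = inf { μ > 0 : ∫_Ω (|Du(x)|/μ)^{p₁(x)} dx ≤ 1 }. Then for every M > 0 there exists δ > 0 such that every such u which is not identically zero and satisfies ‖u‖ ≤ δ obeys J(u) ≥ M · I(u). -/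

import Mathlib

open MeasureTheory ENNReal

/-- `J(u) = ∫_Ω (1/p₁(x))|Du|^{p₁(x)} dx + ∫_Ω (1/p₂(x))|Du|^{p₂(x)} dx`. -/
noncomputable def Jfun (N : ℕ) (Ω : Set (EuclideanSpace ℝ (Fin N)))
    (p₁ p₂ : EuclideanSpace ℝ (Fin N) → ℝ) (u : EuclideanSpace ℝ (Fin N) → ℝ) : ℝ≥0∞ :=
  (∫⁻ x in Ω, ENNReal.ofReal ((1 / p₁ x) * ‖fderiv ℝ u x‖ ^ p₁ x)) +
    ∫⁻ x in Ω, ENNReal.ofReal ((1 / p₂ x) * ‖fderiv ℝ u x‖ ^ p₂ x)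

/-- `I(u) = ∫_Ω (1/q(x))|u|^{q(x)} dx`. -/
noncomputable def Ifun (N : ℕ) (Ω : Set (EuclideanSpace ℝ (Fin N)))
    (q : EuclideanSpace ℝ (Fin N) → ℝ) (u : EuclideanSpace ℝ (Fin N) → ℝ) : ℝ≥0∞ :=
  ∫⁻ x in Ω, ENNReal.ofReal ((1 / q x) * |u x| ^ q x)

/-- `‖u‖ = inf { μ > 0 : ∫_Ω (|Du(x)|/μ)^{p₁(x)} dx ≤ 1 }`, the Luxemburg norm of
    `|Du|` with respect to the variable exponent `p₁` on `Ω`. -/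
noncomputable def luxGrad (N : ℕ) (Ω : Set (EuclideanSpace ℝ (Fin N)))
    (p₁ : EuclideanSpace ℝ (Fin N) → ℝ) (u : EuclideanSpace ℝ (Fin N) → ℝ) : ℝ :=
  sInf {m : ℝ | 0 < m ∧
    ∫⁻ x in Ω, ENNReal.ofReal ((‖fderiv ℝ u x‖ / m) ^ p₁ x) ≤ 1}

open NNReal

/-- Monotonicity of `rpow` in the exponent, for bases in `[0,1]`. -/
lemma aux_rpow_anti {x a b : ℝ} (hx : 0 ≤ x) (hx1 : x ≤ 1) (ha : 0 < a) (hab : a ≤ b) :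
    x ^ b ≤ x ^ a := by
  rcases eq_or_lt_of_le hx with h0 | h0
  · rw [← h0, Real.zero_rpow (by linarith : b ≠ 0), Real.zero_rpow ha.ne']
  · exact Real.rpow_le_rpow_of_exponent_ge h0 hx1 hab

set_option maxHeartbeats 2000000 in
/-- Under `1 < p₂(x) < q⁻ ≤ q⁺ < p₁(x) < N` and `q⁺ < Np₂(x)/(N-p₂(x))` on
    `closure Ω`, `J(u)/I(u) → ∞` as `‖u‖ → 0`: for every `M > 0` there is `δ > 0`
    such that every nontrivial `C¹` function `u` with compact support in `Ω` and
    `‖u‖ ≤ δ` satisfies `J(u) ≥ M I(u)`. -/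
theorem stmt9 (N : ℕ) (hN : 3 ≤ N) (Ω : Set (EuclideanSpace ℝ (Fin N)))
    (hΩo : IsOpen Ω) (hΩb : Bornology.IsBounded Ω)
    (p₁ p₂ q : EuclideanSpace ℝ (Fin N) → ℝ)
    (hp₁ : ContinuousOn p₁ (closure Ω)) (hp₂ : ContinuousOn p₂ (closure Ω))
    (hq : ContinuousOn q (closure Ω))
    (qm qp : ℝ) (hqm : IsLeast (q '' closure Ω) qm)
    (hqp : IsGreatest (q '' closure Ω) qp)
    (hcond : ∀ x ∈ closure Ω, 1 < p₂ x ∧ p₂ x < qm ∧ qp < p₁ x ∧ p₁ x < N)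
    (hcrit : ∀ x ∈ closure Ω, qp < N * p₂ x / (N - p₂ x)) :
    ∀ M : ℝ, 0 < M → ∃ δ : ℝ, 0 < δ ∧
      ∀ u : EuclideanSpace ℝ (Fin N) → ℝ,
        ContDiff ℝ 1 u → HasCompactSupport u → tsupport u ⊆ Ω → u ≠ 0 →
        luxGrad N Ω p₁ u ≤ δ →
        ENNReal.ofReal M * Ifun N Ω q u ≤ Jfun N Ω p₁ p₂ u := by
  intro M hM
  have hΩm : MeasurableSet Ω := hΩo.measurableSet
  have hvolfin : volume Ω < ⊤ := hΩb.measure_lt_top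
  have hNpos : (0:ℝ) < N := by
    have : (3:ℝ) ≤ N := by exact_mod_cast hN
    linarith
  obtain ⟨x₀, hx₀c, hqx₀⟩ := hqm.1
  have hKc : IsCompact (closure Ω) := hΩb.isCompact_closure
  obtain ⟨z, hz, hzmax⟩ := hKc.exists_isMaxOn ⟨x₀, hx₀c⟩ hp₂
  set r : ℝ := p₂ z with hrdef
  have h1r : 1 < r := (hcond z hz).1
  have hqmz : qm ≤ q z := hqm.2 (Set.mem_image_of_mem q hz)
  have hqzp : q z ≤ qp := hqp.2 (Set.mem_image_of_mem q hz)
  have hqmqp : qm ≤ qp := hqmz.trans hqzp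
  have hrqm : r < qm := (hcond z hz).2.1
  have h1qm : 1 < qm := h1r.trans hrqm
  have hqp1 : 1 < qp := lt_of_lt_of_le h1qm hqmqp
  have hqpp₁ : qp < p₁ z := (hcond z hz).2.2.1
  have hp₁N : p₁ z < N := (hcond z hz).2.2.2
  have hrN : r < (N:ℝ) := by linarith
  have hcritz : qp < N * r / (N - r) := hcrit z hz
  have hrpos : (0:ℝ) < r := by linarith
  have hqppos : (0:ℝ) < qp := by linarith
  have hqmpos : (0:ℝ) < qm := by linarith
  -- the Sobolev exponent inequality
  have hsobp : r⁻¹ - (N:ℝ)⁻¹ ≤ qp⁻¹ := by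
    have h1 : qp * (N - r) < N * r := by
      rwa [lt_div_iff₀ (by linarith : (0:ℝ) < (N:ℝ) - r)] at hcritz
    have h2 : r⁻¹ - (N:ℝ)⁻¹ = ((N:ℝ) - r) / (r * N) := by
      field_simp
    rw [h2, inv_eq_one_div, div_le_div_iff₀ (by positivity) hqppos]
    nlinarith
  have hsobm : r⁻¹ - (N:ℝ)⁻¹ ≤ qm⁻¹ := by
    refine hsobp.trans ?_
    rw [inv_le_inv₀ hqppos hqmpos]
    exact hqmqp
  -- NNReal exponents
  set pp : ℝ≥0 := r.toNNReal with hppdef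
  have hppr : (pp : ℝ) = r := Real.coe_toNNReal r hrpos.le
  have hpp1 : 1 ≤ pp := Real.one_le_toNNReal.2 h1r.le
  -- constants
  set C1 : ℝ≥0∞ := (eLpNormLESNormFDerivOfLeConst ℝ volume Ω pp qp.toNNReal : ℝ≥0∞) with hC1def
  set C2 : ℝ≥0∞ := (eLpNormLESNormFDerivOfLeConst ℝ volume Ω pp qm.toNNReal : ℝ≥0∞) with hC2def
  set W : ℝ≥0∞ := volume Ω + 1 with hWdef
  have hWne : W ≠ ⊤ := by
    rw [hWdef]
    exact ENNReal.add_ne_top.2 ⟨hvolfin.ne, ENNReal.one_ne_top⟩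
  set α : ℝ := qm / r - 1 with hαdef
  set β : ℝ := qp / r - 1 with hβdef
  have hα : 0 < α := by
    rw [hαdef]
    have : 1 < qm / r := (one_lt_div hrpos).2 hrqm
    linarith
  have hβ : 0 < β := by
    rw [hβdef]
    have : 1 < qp / r := (one_lt_div hrpos).2 (by linarith)
    linarith
  set A : ℝ≥0∞ := ENNReal.ofReal (M / qm) * C2 ^ qm * W ^ α with hAdef
  set B : ℝ≥0∞ := ENNReal.ofReal (M / qm) * C1 ^ qp * W ^ β with hBdef
  have hC2ne : C2 ^ qm ≠ ⊤ := ENNReal.rpow_ne_top_of_nonneg hqmpos.le ENNReal.coe_ne_top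
  have hC1ne : C1 ^ qp ≠ ⊤ := ENNReal.rpow_ne_top_of_nonneg hqppos.le ENNReal.coe_ne_top
  have hAne : A ≠ ⊤ :=
    ENNReal.mul_ne_top (ENNReal.mul_ne_top ENNReal.ofReal_ne_top hC2ne)
      (ENNReal.rpow_ne_top_of_nonneg hα.le hWne)
  have hBne : B ≠ ⊤ :=
    ENNReal.mul_ne_top (ENNReal.mul_ne_top ENNReal.ofReal_ne_top hC1ne)
      (ENNReal.rpow_ne_top_of_nonneg hβ.le hWne)
  set a : ℝ := A.toReal with hadef
  set b : ℝ := B.toReal with hbdef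
  have ha0 : 0 ≤ a := ENNReal.toReal_nonneg
  have hb0 : 0 ≤ b := ENNReal.toReal_nonneg
  set ε₂ : ℝ := (N:ℝ)⁻¹ / 2 / (a + 1) with hε₂def
  set ε₁ : ℝ := (N:ℝ)⁻¹ / 2 / (b + 1) with hε₁def
  have hε₂ : 0 < ε₂ := div_pos (div_pos (inv_pos.2 hNpos) two_pos) (by linarith)
  have hε₁ : 0 < ε₁ := div_pos (div_pos (inv_pos.2 hNpos) two_pos) (by linarith)
  set t : ℝ := min ((ε₂ ^ α⁻¹) ^ r⁻¹) ((ε₁ ^ β⁻¹) ^ r⁻¹) with htdef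
  have ht : 0 < t :=
    lt_min (Real.rpow_pos_of_pos (Real.rpow_pos_of_pos hε₂ _) _)
      (Real.rpow_pos_of_pos (Real.rpow_pos_of_pos hε₁ _) _)
  have htr0 : (0:ℝ) ≤ t ^ r := Real.rpow_nonneg ht.le r
  -- key numeric bounds
  have htr2 : (t ^ r) ^ α ≤ ε₂ := by
    have e1 : t ^ r ≤ ε₂ ^ α⁻¹ := by
      calc t ^ r ≤ ((ε₂ ^ α⁻¹) ^ r⁻¹) ^ r :=
            Real.rpow_le_rpow ht.le (min_le_left _ _) hrpos.le
      _ = ε₂ ^ α⁻¹ := by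
            rw [← Real.rpow_mul (Real.rpow_nonneg hε₂.le _), inv_mul_cancel₀ hrpos.ne',
              Real.rpow_one]
    calc (t ^ r) ^ α ≤ (ε₂ ^ α⁻¹) ^ α := Real.rpow_le_rpow htr0 e1 hα.le
    _ = ε₂ := by
          rw [← Real.rpow_mul hε₂.le, inv_mul_cancel₀ hα.ne', Real.rpow_one]
  have htr1 : (t ^ r) ^ β ≤ ε₁ := by
    have e1 : t ^ r ≤ ε₁ ^ β⁻¹ := by
      calc t ^ r ≤ ((ε₁ ^ β⁻¹) ^ r⁻¹) ^ r :=
            Real.rpow_le_rpow ht.le (min_le_right _ _) hrpos.le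
      _ = ε₁ ^ β⁻¹ := by
            rw [← Real.rpow_mul (Real.rpow_nonneg hε₁.le _), inv_mul_cancel₀ hrpos.ne',
              Real.rpow_one]
    calc (t ^ r) ^ β ≤ (ε₁ ^ β⁻¹) ^ β := Real.rpow_le_rpow htr0 e1 hβ.le
    _ = ε₁ := by
          rw [← Real.rpow_mul hε₁.le, inv_mul_cancel₀ hβ.ne', Real.rpow_one]
  have hkey : a * (t ^ r) ^ α + b * (t ^ r) ^ β ≤ (N:ℝ)⁻¹ := by
    have k2 : a * (t ^ r) ^ α ≤ (N:ℝ)⁻¹ / 2 := by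
      calc a * (t ^ r) ^ α ≤ a * ε₂ := mul_le_mul_of_nonneg_left htr2 ha0
      _ = ((N:ℝ)⁻¹ / 2) * (a / (a + 1)) := by rw [hε₂def]; ring
      _ ≤ ((N:ℝ)⁻¹ / 2) * 1 :=
            mul_le_mul_of_nonneg_left ((div_le_one (by linarith)).2 (by linarith))
              (by positivity)
      _ = (N:ℝ)⁻¹ / 2 := mul_one _
    have k1 : b * (t ^ r) ^ β ≤ (N:ℝ)⁻¹ / 2 := by
      calc b * (t ^ r) ^ β ≤ b * ε₁ := mul_le_mul_of_nonneg_left htr1 hb0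
      _ = ((N:ℝ)⁻¹ / 2) * (b / (b + 1)) := by rw [hε₁def]; ring
      _ ≤ ((N:ℝ)⁻¹ / 2) * 1 :=
            mul_le_mul_of_nonneg_left ((div_le_one (by linarith)).2 (by linarith))
              (by positivity)
      _ = (N:ℝ)⁻¹ / 2 := mul_one _
    linarith
  have hkeyE : A * ENNReal.ofReal ((t ^ r) ^ α) + B * ENNReal.ofReal ((t ^ r) ^ β)
      ≤ ENNReal.ofReal (N:ℝ)⁻¹ := by
    have e2 : A * ENNReal.ofReal ((t ^ r) ^ α) = ENNReal.ofReal (a * (t ^ r) ^ α) := by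
      rw [ENNReal.ofReal_mul ha0, hadef, ENNReal.ofReal_toReal hAne]
    have e1 : B * ENNReal.ofReal ((t ^ r) ^ β) = ENNReal.ofReal (b * (t ^ r) ^ β) := by
      rw [ENNReal.ofReal_mul hb0, hbdef, ENNReal.ofReal_toReal hBne]
    rw [e2, e1, ← ENNReal.ofReal_add (by positivity) (by positivity)]
    exact ENNReal.ofReal_le_ofReal hkey
  -- the choice of δ
  refine ⟨t / 2, by positivity, ?_⟩
  intro u hu hcs hts hune hlux
  -- basic facts about u
  have hfc : Continuous (fderiv ℝ u) := hu.continuous_fderiv one_ne_zero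
  have hDm : Measurable fun x => ‖fderiv ℝ u x‖ := hfc.norm.measurable
  have hum : Measurable u := hu.continuous.measurable
  have hp₁m : AEMeasurable p₁ (volume.restrict Ω) :=
    (hp₁.mono subset_closure).aemeasurable hΩm
  -- exponent facts on Ω
  have hfacts : ∀ x ∈ Ω, 1 < p₂ x ∧ p₂ x ≤ r ∧ r ≤ p₁ x ∧ p₁ x < N ∧ p₂ x < N := by
    intro x hx
    have hxc := subset_closure hx
    obtain ⟨h2, h3, h4, h5⟩ := hcond x hxc
    have hp2r : p₂ x ≤ r := hzmax hxc
    exact ⟨h2, hp2r, by linarith, h5, by linarith⟩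
  -- the Luxemburg norm set is nonempty; extract a small admissible `m`
  obtain ⟨c, hc⟩ := hfc.bounded_above_of_compact_support (hcs.fderiv ℝ)
  have hc0 : 0 ≤ c := le_trans (norm_nonneg _) (hc 0)
  set V : ℝ := (volume Ω).toReal with hVdef
  have hV0 : 0 ≤ V := ENNReal.toReal_nonneg
  set m₀ : ℝ := (c + 1) * (V + 1) with hm₀def
  have hm₀ : 0 < m₀ := by positivity
  have hm₀mem : m₀ ∈ {m : ℝ | 0 < m ∧
      ∫⁻ x in Ω, ENNReal.ofReal ((‖fderiv ℝ u x‖ / m) ^ p₁ x) ≤ 1} := by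
    refine ⟨hm₀, ?_⟩
    have hpt : ∀ x ∈ Ω, ENNReal.ofReal ((‖fderiv ℝ u x‖ / m₀) ^ p₁ x)
        ≤ ENNReal.ofReal (1 / (V + 1)) := by
      intro x hx
      have h1p : 1 ≤ p₁ x := by
        have := (hfacts x hx).2.2.1
        linarith
      apply ENNReal.ofReal_le_ofReal
      have hd0 : 0 ≤ ‖fderiv ℝ u x‖ / m₀ := by positivity
      have hd1 : ‖fderiv ℝ u x‖ / m₀ ≤ 1 / (V + 1) := by
        rw [div_le_div_iff₀ hm₀ (by linarith)]
        have := hc x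
        nlinarith
      have hd2 : ‖fderiv ℝ u x‖ / m₀ ≤ 1 := by
        refine hd1.trans ?_
        rw [div_le_one (by linarith)]
        linarith
      calc (‖fderiv ℝ u x‖ / m₀) ^ p₁ x ≤ (‖fderiv ℝ u x‖ / m₀) ^ (1:ℝ) :=
            aux_rpow_anti hd0 hd2 one_pos h1p
      _ = ‖fderiv ℝ u x‖ / m₀ := Real.rpow_one _
      _ ≤ 1 / (V + 1) := hd1
    calc ∫⁻ x in Ω, ENNReal.ofReal ((‖fderiv ℝ u x‖ / m₀) ^ p₁ x)
        ≤ ∫⁻ _ in Ω, ENNReal.ofReal (1 / (V + 1)) := setLIntegral_mono' hΩm hpt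
    _ = ENNReal.ofReal (1 / (V + 1)) * volume Ω := setLIntegral_const _ _
    _ = ENNReal.ofReal (1 / (V + 1)) * ENNReal.ofReal V := by
          rw [hVdef, ENNReal.ofReal_toReal hvolfin.ne]
    _ = ENNReal.ofReal (1 / (V + 1) * V) := (ENNReal.ofReal_mul (by positivity)).symm
    _ ≤ 1 := by
          rw [← ENNReal.ofReal_one]
          apply ENNReal.ofReal_le_ofReal
          rw [div_mul_eq_mul_div, one_mul, div_le_one (by linarith)]
          linarith
  have hSetNe : {m : ℝ | 0 < m ∧
      ∫⁻ x in Ω, ENNReal.ofReal ((‖fderiv ℝ u x‖ / m) ^ p₁ x) ≤ 1}.Nonempty := ⟨m₀, hm₀mem⟩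
  have hlux' : sInf {m : ℝ | 0 < m ∧
      ∫⁻ x in Ω, ENNReal.ofReal ((‖fderiv ℝ u x‖ / m) ^ p₁ x) ≤ 1} < t := by
    have h' : luxGrad N Ω p₁ u < t := lt_of_le_of_lt hlux (by linarith)
    simpa [luxGrad] using h'
  obtain ⟨m, hmS, hmt⟩ := exists_lt_of_csInf_lt hSetNe hlux'
  obtain ⟨hm0, hmmod⟩ := hmS
  -- the main quantity
  set S : ℝ≥0∞ := ∫⁻ x in Ω, ENNReal.ofReal (‖fderiv ℝ u x‖ ^ r) with hSdef
  -- Step 1: lower bound for J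
  have hJ : ENNReal.ofReal (N:ℝ)⁻¹ * S ≤ Jfun N Ω p₁ p₂ u := by
    have hpt : ∀ x ∈ Ω, ENNReal.ofReal (N:ℝ)⁻¹ * ENNReal.ofReal (‖fderiv ℝ u x‖ ^ r)
        ≤ ENNReal.ofReal ((1 / p₁ x) * ‖fderiv ℝ u x‖ ^ p₁ x)
          + ENNReal.ofReal ((1 / p₂ x) * ‖fderiv ℝ u x‖ ^ p₂ x) := by
      intro x hx
      obtain ⟨h2, hp2r, hrp1, h5, h6⟩ := hfacts x hx
      have hd0 : (0:ℝ) ≤ ‖fderiv ℝ u x‖ := norm_nonneg _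
      rw [← ENNReal.ofReal_mul (by positivity)]
      rcases le_or_gt ‖fderiv ℝ u x‖ 1 with hd1 | hd1
      · refine le_trans (ENNReal.ofReal_le_ofReal ?_) le_add_self
        have e1 : (N:ℝ)⁻¹ ≤ 1 / p₂ x := by
          rw [one_div, inv_le_inv₀ hNpos (by linarith : (0:ℝ) < p₂ x)]
          exact h6.le
        exact mul_le_mul e1 (aux_rpow_anti hd0 hd1 (by linarith) hp2r)
          (by positivity) (one_div_nonneg.2 (by linarith))
      · refine le_trans (ENNReal.ofReal_le_ofReal ?_) le_self_add
        have e1 : (N:ℝ)⁻¹ ≤ 1 / p₁ x := by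
          rw [one_div, inv_le_inv₀ hNpos (by linarith : (0:ℝ) < p₁ x)]
          exact h5.le
        exact mul_le_mul e1 (Real.rpow_le_rpow_of_exponent_le hd1.le hrp1)
          (by positivity) (one_div_nonneg.2 (by linarith))
    have hmeas1 : AEMeasurable (fun x => ENNReal.ofReal ((1 / p₁ x) * ‖fderiv ℝ u x‖ ^ p₁ x))
        (volume.restrict Ω) :=
      ((aemeasurable_const.div hp₁m).mul (hDm.aemeasurable.pow hp₁m)).ennreal_ofReal
    calc ENNReal.ofReal (N:ℝ)⁻¹ * S
        = ∫⁻ x in Ω, ENNReal.ofReal (N:ℝ)⁻¹ * ENNReal.ofReal (‖fderiv ℝ u x‖ ^ r) := by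
          rw [hSdef, lintegral_const_mul' _ _ ENNReal.ofReal_ne_top]
    _ ≤ ∫⁻ x in Ω, (ENNReal.ofReal ((1 / p₁ x) * ‖fderiv ℝ u x‖ ^ p₁ x)
          + ENNReal.ofReal ((1 / p₂ x) * ‖fderiv ℝ u x‖ ^ p₂ x)) :=
          setLIntegral_mono' hΩm hpt
    _ = Jfun N Ω p₁ p₂ u := lintegral_add_left' hmeas1 _
  -- Step 2: bound S via the Luxemburg norm
  have hSle : S ≤ ENNReal.ofReal (t ^ r) * W := by
    have hpt : ∀ x ∈ Ω, ENNReal.ofReal (‖fderiv ℝ u x‖ ^ r)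
        ≤ ENNReal.ofReal (m ^ r)
          + ENNReal.ofReal (m ^ r) * ENNReal.ofReal ((‖fderiv ℝ u x‖ / m) ^ p₁ x) := by
      intro x hx
      obtain ⟨h2, hp2r, hrp1, h5, h6⟩ := hfacts x hx
      have hd0 : (0:ℝ) ≤ ‖fderiv ℝ u x‖ := norm_nonneg _
      rcases le_or_gt ‖fderiv ℝ u x‖ m with hdm | hdm
      · exact le_trans (ENNReal.ofReal_le_ofReal (Real.rpow_le_rpow hd0 hdm hrpos.le))
          le_self_add
      · have h1d : (1:ℝ) ≤ ‖fderiv ℝ u x‖ / m := (one_le_div hm0).2 hdm.le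
        have hmr : (0:ℝ) < m ^ r := Real.rpow_pos_of_pos hm0 r
        have heq : ‖fderiv ℝ u x‖ ^ r = m ^ r * (‖fderiv ℝ u x‖ / m) ^ r := by
          rw [Real.div_rpow hd0 hm0.le]
          field_simp
        refine le_trans ?_ le_add_self
        rw [heq, ENNReal.ofReal_mul hmr.le]
        exact mul_le_mul_right (ENNReal.ofReal_le_ofReal
          (Real.rpow_le_rpow_of_exponent_le h1d hrp1)) _
    calc S ≤ ∫⁻ x in Ω, (ENNReal.ofReal (m ^ r)
          + ENNReal.ofReal (m ^ r) * ENNReal.ofReal ((‖fderiv ℝ u x‖ / m) ^ p₁ x)) :=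
          setLIntegral_mono' hΩm hpt
    _ = ENNReal.ofReal (m ^ r) * volume Ω
          + ENNReal.ofReal (m ^ r) * ∫⁻ x in Ω, ENNReal.ofReal ((‖fderiv ℝ u x‖ / m) ^ p₁ x) := by
          rw [lintegral_add_left measurable_const, setLIntegral_const,
            lintegral_const_mul' _ _ ENNReal.ofReal_ne_top]
    _ ≤ ENNReal.ofReal (m ^ r) * volume Ω + ENNReal.ofReal (m ^ r) * 1 := by
          gcongr
    _ = ENNReal.ofReal (m ^ r) * W := by
          rw [hWdef, mul_one, mul_add, mul_one]
    _ ≤ ENNReal.ofReal (t ^ r) * W :=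
          mul_le_mul_left (ENNReal.ofReal_le_ofReal
            (Real.rpow_le_rpow hm0.le hmt.le hrpos.le)) W
  have hSne' : S ≠ ⊤ :=
    (lt_of_le_of_lt hSle (ENNReal.mul_lt_top ENNReal.ofReal_lt_top hWne.lt_top)).ne
  -- Step 3: Sobolev inequality
  have hsupp : Function.support u ⊆ Ω := (subset_tsupport u).trans hts
  have hfr : Module.finrank ℝ (EuclideanSpace ℝ (Fin N)) = N := finrank_euclideanSpace_fin
  have hsob2 : ∀ e : ℝ, 1 < e → r⁻¹ - (N:ℝ)⁻¹ ≤ e⁻¹ →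
      (∫⁻ x in Ω, ENNReal.ofReal (|u x| ^ e)) ≤
        (eLpNormLESNormFDerivOfLeConst ℝ volume Ω pp e.toNNReal : ℝ≥0∞) ^ e * S ^ (e / r) := by
    intro e he hre
    have he0 : (0:ℝ) < e := by linarith
    have hene : (e.toNNReal : ℝ≥0∞) ≠ 0 := by
      simp only [ne_eq, ENNReal.coe_eq_zero, Real.toNNReal_eq_zero]
      linarith
    have heco : ((e.toNNReal : ℝ≥0∞)).toReal = e := by
      rw [ENNReal.coe_toReal, Real.coe_toNNReal e he0.le]
    have harg1 : (pp : ℝ) < Module.finrank ℝ (EuclideanSpace ℝ (Fin N)) := by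
      rw [hfr, hppr]; exact hrN
    have harg2 : (pp : ℝ)⁻¹ - (Module.finrank ℝ (EuclideanSpace ℝ (Fin N)) : ℝ)⁻¹
        ≤ ((e.toNNReal : ℝ))⁻¹ := by
      rw [hfr, hppr, Real.coe_toNNReal e he0.le]
      exact hre
    have hSob := eLpNorm_le_eLpNorm_fderiv_of_le volume hu hsupp hpp1
      (by exact_mod_cast harg1) (by exact_mod_cast harg2) hΩb
    have hppne : ((pp : ℝ≥0∞)) ≠ 0 := by
      simp only [ne_eq, ENNReal.coe_eq_zero]
      intro h
      rw [h] at hppr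
      simp at hppr
      linarith
    have hppco : ((pp : ℝ≥0∞)).toReal = r := by rw [ENNReal.coe_toReal, hppr]
    have hDnorm : eLpNorm (fderiv ℝ u) pp volume = S ^ (r⁻¹ : ℝ) := by
      simp_rw [eLpNorm_eq_lintegral_rpow_enorm_toReal hppne ENNReal.coe_ne_top, enorm_eq_nnnorm]; rw [hppco]
      have hss : Function.support (fun x => ((‖fderiv ℝ u x‖₊ : ℝ≥0∞)) ^ r) ⊆ Ω := by
        rw [Function.support_subset_iff']
        intro x hxΩ
        have hx0 : fderiv ℝ u x = 0 := by
          by_contra h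
          exact hxΩ (hts (support_fderiv_subset ℝ (Function.mem_support.2 h)))
        simp [hx0, ENNReal.zero_rpow_of_pos hrpos]
      rw [← setLIntegral_eq_of_support_subset hss]
      have : ∀ x : EuclideanSpace ℝ (Fin N),
          ((‖fderiv ℝ u x‖₊ : ℝ≥0∞)) ^ r = ENNReal.ofReal (‖fderiv ℝ u x‖ ^ r) := by
        intro x
        rw [← enorm_eq_nnnorm, ← ofReal_norm, ENNReal.ofReal_rpow_of_nonneg (norm_nonneg _) hrpos.le]
      simp_rw [this]
      rw [← hSdef, one_div]
    have huNorm : (∫⁻ x in Ω, ENNReal.ofReal (|u x| ^ e))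
        ≤ (eLpNorm u e.toNNReal volume) ^ e := by
      have hins : ∀ x : EuclideanSpace ℝ (Fin N),
          ENNReal.ofReal (|u x| ^ e) = ((‖u x‖₊ : ℝ≥0∞)) ^ e := by
        intro x
        rw [← enorm_eq_nnnorm, ← ofReal_norm, Real.norm_eq_abs,
          ENNReal.ofReal_rpow_of_nonneg (abs_nonneg _) he0.le]
      calc (∫⁻ x in Ω, ENNReal.ofReal (|u x| ^ e))
          ≤ ∫⁻ x, ENNReal.ofReal (|u x| ^ e) := setLIntegral_le_lintegral _ _
      _ = ∫⁻ x, ((‖u x‖₊ : ℝ≥0∞)) ^ e := by simp_rw [hins]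
      _ = (eLpNorm u e.toNNReal volume) ^ e := by
            simp_rw [eLpNorm_eq_lintegral_rpow_enorm_toReal hene ENNReal.coe_ne_top, enorm_eq_nnnorm]; rw [heco, one_div,
              ← ENNReal.rpow_mul, inv_mul_cancel₀ he0.ne', ENNReal.rpow_one]
    calc (∫⁻ x in Ω, ENNReal.ofReal (|u x| ^ e)) ≤ (eLpNorm u e.toNNReal volume) ^ e := huNorm
    _ ≤ ((eLpNormLESNormFDerivOfLeConst ℝ volume Ω pp e.toNNReal : ℝ≥0∞)
          * eLpNorm (fderiv ℝ u) pp volume) ^ e := ENNReal.rpow_le_rpow hSob he0.le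
    _ = (eLpNormLESNormFDerivOfLeConst ℝ volume Ω pp e.toNNReal : ℝ≥0∞) ^ e
          * (S ^ (r⁻¹ : ℝ)) ^ e := by
          rw [ENNReal.mul_rpow_of_nonneg _ _ he0.le, hDnorm]
    _ = (eLpNormLESNormFDerivOfLeConst ℝ volume Ω pp e.toNNReal : ℝ≥0∞) ^ e * S ^ (e / r) := by
          rw [← ENNReal.rpow_mul]
          congr 1
          rw [inv_mul_eq_div]
  have hGp : (∫⁻ x in Ω, ENNReal.ofReal (|u x| ^ qp)) ≤ C1 ^ qp * S ^ (qp / r) :=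
    hsob2 qp hqp1 hsobp
  have hGm : (∫⁻ x in Ω, ENNReal.ofReal (|u x| ^ qm)) ≤ C2 ^ qm * S ^ (qm / r) :=
    hsob2 qm h1qm hsobm
  -- Step 4: bound I
  have hI : Ifun N Ω q u ≤ ENNReal.ofReal (1 / qm) *
      ((∫⁻ x in Ω, ENNReal.ofReal (|u x| ^ qm)) + ∫⁻ x in Ω, ENNReal.ofReal (|u x| ^ qp)) := by
    have hpt : ∀ x ∈ Ω, ENNReal.ofReal ((1 / q x) * |u x| ^ q x)
        ≤ ENNReal.ofReal ((1 / qm) * (|u x| ^ qm + |u x| ^ qp)) := by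
      intro x hx
      have hxc := subset_closure hx
      have hq1 : qm ≤ q x := hqm.2 (Set.mem_image_of_mem q hxc)
      have hq2 : q x ≤ qp := hqp.2 (Set.mem_image_of_mem q hxc)
      have hq0 : 0 < q x := by linarith
      apply ENNReal.ofReal_le_ofReal
      have hu0 : (0:ℝ) ≤ |u x| := abs_nonneg _
      have e1 : 1 / q x ≤ 1 / qm := by
        rw [one_div, one_div, inv_le_inv₀ hq0 hqmpos]
        exact hq1
      rcases le_or_gt (|u x|) 1 with h | h
      · refine mul_le_mul e1 ?_ (by positivity) (one_div_nonneg.2 hqmpos.le)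
        calc |u x| ^ q x ≤ |u x| ^ qm := aux_rpow_anti hu0 h hqmpos hq1
        _ ≤ |u x| ^ qm + |u x| ^ qp := le_add_of_nonneg_right (by positivity)
      · refine mul_le_mul e1 ?_ (by positivity) (one_div_nonneg.2 hqmpos.le)
        calc |u x| ^ q x ≤ |u x| ^ qp := Real.rpow_le_rpow_of_exponent_le h.le hq2
        _ ≤ |u x| ^ qm + |u x| ^ qp := le_add_of_nonneg_left (by positivity)
    have hmeas2 : Measurable fun x => ENNReal.ofReal (|u x| ^ qm) :=
      (hum.abs.pow measurable_const).ennreal_ofReal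
    calc Ifun N Ω q u ≤ ∫⁻ x in Ω, ENNReal.ofReal ((1 / qm) * (|u x| ^ qm + |u x| ^ qp)) :=
          setLIntegral_mono' hΩm hpt
    _ = ENNReal.ofReal (1 / qm) *
          ((∫⁻ x in Ω, ENNReal.ofReal (|u x| ^ qm)) + ∫⁻ x in Ω, ENNReal.ofReal (|u x| ^ qp)) := by
          have : ∀ x : EuclideanSpace ℝ (Fin N),
              ENNReal.ofReal ((1 / qm) * (|u x| ^ qm + |u x| ^ qp))
                = ENNReal.ofReal (1 / qm) *
                  (ENNReal.ofReal (|u x| ^ qm) + ENNReal.ofReal (|u x| ^ qp)) := by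
            intro x
            rw [ENNReal.ofReal_mul (by positivity), ENNReal.ofReal_add (by positivity)
              (by positivity)]
          simp_rw [this]
          rw [lintegral_const_mul' _ _ ENNReal.ofReal_ne_top,
            lintegral_add_left hmeas2]
  -- Step 5: conclusion
  have hmain : ENNReal.ofReal (M / qm) * (C2 ^ qm * S ^ (qm / r) + C1 ^ qp * S ^ (qp / r))
      ≤ ENNReal.ofReal (N:ℝ)⁻¹ * S := by
    by_cases hS0 : S = 0
    · rw [hS0, ENNReal.zero_rpow_of_pos (by positivity), ENNReal.zero_rpow_of_pos (by positivity)]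
      simp
    · have hq1 : S ^ (qm / r) = S ^ α * S := by
        rw [show qm / r = α + 1 by rw [hαdef]; ring, ENNReal.rpow_add _ _ hS0 hSne',
          ENNReal.rpow_one]
      have hq2 : S ^ (qp / r) = S ^ β * S := by
        rw [show qp / r = β + 1 by rw [hβdef]; ring, ENNReal.rpow_add _ _ hS0 hSne',
          ENNReal.rpow_one]
      have hSα : S ^ α ≤ ENNReal.ofReal ((t ^ r) ^ α) * W ^ α := by
        calc S ^ α ≤ (ENNReal.ofReal (t ^ r) * W) ^ α := ENNReal.rpow_le_rpow hSle hα.le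
        _ = ENNReal.ofReal ((t ^ r) ^ α) * W ^ α := by
              rw [ENNReal.mul_rpow_of_nonneg _ _ hα.le,
                ENNReal.ofReal_rpow_of_nonneg htr0 hα.le]
      have hSβ : S ^ β ≤ ENNReal.ofReal ((t ^ r) ^ β) * W ^ β := by
        calc S ^ β ≤ (ENNReal.ofReal (t ^ r) * W) ^ β := ENNReal.rpow_le_rpow hSle hβ.le
        _ = ENNReal.ofReal ((t ^ r) ^ β) * W ^ β := by
              rw [ENNReal.mul_rpow_of_nonneg _ _ hβ.le,
                ENNReal.ofReal_rpow_of_nonneg htr0 hβ.le]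
      calc ENNReal.ofReal (M / qm) * (C2 ^ qm * S ^ (qm / r) + C1 ^ qp * S ^ (qp / r))
          = (ENNReal.ofReal (M / qm) * C2 ^ qm * S ^ α
              + ENNReal.ofReal (M / qm) * C1 ^ qp * S ^ β) * S := by
            rw [hq1, hq2]; ring
      _ ≤ (A * ENNReal.ofReal ((t ^ r) ^ α) + B * ENNReal.ofReal ((t ^ r) ^ β)) * S := by
            refine mul_le_mul_left (add_le_add ?_ ?_) S
            · calc ENNReal.ofReal (M / qm) * C2 ^ qm * S ^ α
                  ≤ ENNReal.ofReal (M / qm) * C2 ^ qm * (ENNReal.ofReal ((t ^ r) ^ α) * W ^ α) :=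
                    mul_le_mul_right hSα _
              _ = A * ENNReal.ofReal ((t ^ r) ^ α) := by rw [hAdef]; ring
            · calc ENNReal.ofReal (M / qm) * C1 ^ qp * S ^ β
                  ≤ ENNReal.ofReal (M / qm) * C1 ^ qp * (ENNReal.ofReal ((t ^ r) ^ β) * W ^ β) :=
                    mul_le_mul_right hSβ _
              _ = B * ENNReal.ofReal ((t ^ r) ^ β) := by rw [hBdef]; ring
      _ ≤ ENNReal.ofReal (N:ℝ)⁻¹ * S := mul_le_mul_left hkeyE S
  calc ENNReal.ofReal M * Ifun N Ω q u
      ≤ ENNReal.ofReal M * (ENNReal.ofReal (1 / qm) *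
          ((∫⁻ x in Ω, ENNReal.ofReal (|u x| ^ qm))
            + ∫⁻ x in Ω, ENNReal.ofReal (|u x| ^ qp))) := mul_le_mul_right hI _
  _ = ENNReal.ofReal (M / qm) *
        ((∫⁻ x in Ω, ENNReal.ofReal (|u x| ^ qm))
          + ∫⁻ x in Ω, ENNReal.ofReal (|u x| ^ qp)) := by
        rw [← mul_assoc, ← ENNReal.ofReal_mul hM.le, mul_one_div]
  _ ≤ ENNReal.ofReal (M / qm) * (C2 ^ qm * S ^ (qm / r) + C1 ^ qp * S ^ (qp / r)) :=
        mul_le_mul_right (add_le_add hGm hGp) _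
  _ ≤ ENNReal.ofReal (N:ℝ)⁻¹ * S := hmain
  _ ≤ Jfun N Ω p₁ p₂ u := hJ
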